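/- Let M be a root-closed inside factorial monoid with base Q. Then M = Ap(M,Q) ⊕ ⟨Q⟩: every x ∈ M can be written as x = Σ_{q∈Q} λ_q q + z with λ_q ∈ ℕ and z ∈ Ap(M,Q), and the λ_q and z are uniquely determined. -/

import Mathlib

/-- `x ≤_M y` : divisibility in the additive monoid `M`. -/
def MDvd {M : Type*} [AddCancelCommMonoid M] (x y : M) : Prop := ∃ z : M, y = x + z

/-- The Apéry set `Ap(M,Q) = M \ (Q + M)`. -/
def AperyM {M : Type*} [AddCancelCommMonoid M] (Q : Set M) : Set M :=
  {x | ∀ q ∈ Q, ¬ MDvd q x}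

/-- The sum `Σ_{q ∈ Q} λ_q q` encoded by a finitely supported function. -/
def fsum {M : Type*} [AddCancelCommMonoid M] (f : M →₀ ℕ) : M :=
  f.sum fun q n => n • q

/-- `⟨Q⟩` is factorial, freely generated by `Q`. -/
def FreeOn {M : Type*} [AddCancelCommMonoid M] (Q : Set M) : Prop :=
  ∀ f g : M →₀ ℕ, (f.support : Set M) ⊆ Q → (g.support : Set M) ⊆ Q →
    fsum f = fsum g → f = g

/-- `M` is inside factorial with base `Q`. -/
def InsideFactorial {M : Type*} [AddCancelCommMonoid M] (Q : Set M) : Prop :=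
  FreeOn Q ∧ ∀ x : M, x ≠ 0 → ∃ m : ℕ, 0 < m ∧ m • x ∈ AddSubmonoid.closure Q

/-- `M` is root-closed: `n • a ≤_M n • b` for a positive `n` implies `a ≤_M b`. -/
def RootClosedM (M : Type*) [AddCancelCommMonoid M] : Prop :=
  ∀ (n : ℕ) (a b : M), 0 < n → MDvd (n • a) (n • b) → MDvd a b

section Aux

variable {M : Type*} [AddCancelCommMonoid M]

lemma fsum_zero : fsum (0 : M →₀ ℕ) = 0 := by simp [fsum]

lemma fsum_add (f g : M →₀ ℕ) : fsum (f + g) = fsum f + fsum g := by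
  unfold fsum
  exact Finsupp.sum_add_index' (fun a => zero_nsmul a) (fun a b₁ b₂ => add_nsmul a b₁ b₂)

lemma fsum_single (q : M) (n : ℕ) : fsum (Finsupp.single q n) = n • q := by
  unfold fsum
  exact Finsupp.sum_single_index (zero_nsmul q)

lemma fsum_nsmul (k : ℕ) (f : M →₀ ℕ) : fsum (k • f) = k • fsum f := by
  induction k with
  | zero => simp [fsum_zero]
  | succ k ih =>
      rw [succ_nsmul, succ_nsmul, fsum_add, ih]

/-- Total degree of a finsupp. -/
def FDeg (f : M →₀ ℕ) : ℕ := f.sum fun _ n => n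

lemma FDeg_add (f g : M →₀ ℕ) : FDeg (f + g) = FDeg f + FDeg g := by
  unfold FDeg
  exact Finsupp.sum_add_index' (fun _ => rfl) (fun _ _ _ => rfl)

lemma FDeg_single (q : M) (n : ℕ) : FDeg (Finsupp.single q n) = n := by
  unfold FDeg
  exact Finsupp.sum_single_index rfl


lemma single_supp_subset {Q : Set M} {q : M} (hq : q ∈ Q) (c : ℕ) :
    ((Finsupp.single q c).support : Set M) ⊆ Q := by
  intro a ha
  rw [Finset.mem_coe] at ha
  have := Finsupp.support_single_subset ha
  rw [Finset.mem_singleton] at this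
  subst this; exact hq

lemma add_supp_subset {Q : Set M} {f g : M →₀ ℕ} (hf : (f.support : Set M) ⊆ Q)
    (hg : (g.support : Set M) ⊆ Q) : (((f + g)).support : Set M) ⊆ Q := by
  classical
  intro a ha
  rw [Finset.mem_coe] at ha
  have := Finsupp.support_add ha
  rw [Finset.mem_union] at this
  rcases this with h | h
  · exact hf h
  · exact hg h

lemma smul_supp_subset {Q : Set M} (c : ℕ) {f : M →₀ ℕ} (hf : (f.support : Set M) ⊆ Q) :
    ((c • f).support : Set M) ⊆ Q := by
  intro a ha
  rw [Finset.mem_coe, Finsupp.mem_support_iff] at ha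
  simp only [Finsupp.smul_apply, smul_eq_mul] at ha
  exact hf (Finsupp.mem_support_iff.mpr fun h => ha (by rw [h, mul_zero]))

lemma exists_fsum {Q : Set M} {y : M} (hy : y ∈ AddSubmonoid.closure Q) :
    ∃ f : M →₀ ℕ, (f.support : Set M) ⊆ Q ∧ y = fsum f := by
  induction hy using AddSubmonoid.closure_induction with
  | mem q hq =>
      exact ⟨Finsupp.single q 1, single_supp_subset hq 1, by simp [fsum_single]⟩
  | zero => exact ⟨0, by simp, by simp [fsum_zero]⟩
  | add a b _ _ iha ihb =>
      obtain ⟨f, hf, hfe⟩ := iha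
      obtain ⟨g, hg, hge⟩ := ihb
      exact ⟨f + g, add_supp_subset hf hg, by rw [fsum_add, hfe, hge]⟩

lemma zero_not_mem_of_free {Q : Set M} (hfree : FreeOn Q) : (0 : M) ∉ Q := by
  intro h0
  have := hfree (Finsupp.single 0 1) 0 (single_supp_subset h0 1)
    (by simp) (by simp [fsum_single, fsum_zero])
  have := DFunLike.congr_fun this 0
  simp at this

lemma zero_mem_apery {Q : Set M} (hred : ∀ a b : M, a + b = 0 → a = 0)
    (hQ0 : (0 : M) ∉ Q) : (0 : M) ∈ AperyM Q := by
  intro q hq ⟨w, hw⟩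
  exact hQ0 (by rwa [hred q w hw.symm] at hq)

/-- Key existence lemma, by strong induction on the degree of a witness
decomposition of a positive multiple of `x`. -/
lemma exists_decomp {Q : Set M} (hred : ∀ a b : M, a + b = 0 → a = 0)
    (hfree : FreeOn Q)
    (hIF2 : ∀ x : M, x ≠ 0 → ∃ m : ℕ, 0 < m ∧ m • x ∈ AddSubmonoid.closure Q) :
    ∀ N : ℕ, ∀ (x : M) (m : ℕ) (g : M →₀ ℕ), 0 < m → (g.support : Set M) ⊆ Q →
      m • x = fsum g → FDeg g ≤ N →
      ∃ f : M →₀ ℕ, ∃ z : M, (f.support : Set M) ⊆ Q ∧ z ∈ AperyM Q ∧ x = fsum f + z := by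
  intro N
  induction N using Nat.strong_induction_on with
  | _ N IH =>
  intro x m g hm hgsupp heq hdeg
  by_cases hx : x ∈ AperyM Q
  · exact ⟨0, x, by simp, hx, by simp [fsum_zero]⟩
  obtain ⟨q, hqQ, x', hx'⟩ : ∃ q ∈ Q, ∃ x', x = q + x' := by
    simp only [AperyM, MDvd, Set.mem_setOf_eq, not_forall, not_not] at hx
    obtain ⟨q, hq, hd⟩ := hx
    exact ⟨q, hq, hd⟩
  by_cases hx0 : x' = 0
  · exact ⟨Finsupp.single q 1, 0, single_supp_subset hqQ 1,
      zero_mem_apery hred (zero_not_mem_of_free hfree), by simp [hx', hx0, fsum_single]⟩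
  -- x' ≠ 0 : get a multiple of x' in the free submonoid
  obtain ⟨k, hk, hmem⟩ := hIF2 x' hx0
  obtain ⟨h, hhsupp, hhe⟩ := exists_fsum hmem
  -- (k*m) • x = fsum (k • g) = fsum ((k*m) • single q 1 + m • h)
  have key : k • g = Finsupp.single q (k * m) + m • h := by
    apply hfree
    · exact smul_supp_subset k hgsupp
    · exact add_supp_subset (single_supp_subset hqQ _) (smul_supp_subset m hhsupp)
    · rw [fsum_nsmul, ← heq, fsum_add, fsum_single, fsum_nsmul, ← hhe, hx']
      rw [smul_comm k m, smul_add, smul_add, smul_smul m k q, mul_comm m k]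
  have hgq : m ≤ g q := by
    have := DFunLike.congr_fun key q
    simp only [Finsupp.smul_apply, Finsupp.add_apply, Finsupp.single_eq_same,
      smul_eq_mul] at this
    have h2 : k * m ≤ k * g q := this ▸ Nat.le_add_right _ _
    exact Nat.le_of_mul_le_mul_left h2 hk
  -- split g
  set g' := g - Finsupp.single q m with hg'
  have hgsplit : g = Finsupp.single q m + g' := by
    rw [hg']
    rw [add_tsub_cancel_of_le]
    intro a
    rcases eq_or_ne a q with rfl | hne
    · simpa using hgq
    · simp [Finsupp.single_apply, hne.symm, Ne.symm]
  have hg'supp : (g'.support : Set M) ⊆ Q := by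
    intro a ha
    simp only [Finset.mem_coe, Finsupp.mem_support_iff, hg', Finsupp.tsub_apply] at ha
    apply hgsupp
    simp only [Finset.mem_coe, Finsupp.mem_support_iff]
    omega
  have hx'eq : m • x' = fsum g' := by
    have h1 : m • x = m • q + fsum g' := by
      rw [heq, hgsplit, fsum_add, fsum_single]
    rw [hx', smul_add] at h1
    exact add_left_cancel h1
  have hdeg' : FDeg g' < N := by
    have : FDeg g = m + FDeg g' := by rw [hgsplit, FDeg_add, FDeg_single]
    omega
  obtain ⟨f', z', hf'supp, hz', hx'dec⟩ := IH (FDeg g') hdeg' x' m g' hm hg'supp hx'eq le_rfl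
  refine ⟨f' + Finsupp.single q 1, z',
    add_supp_subset hf'supp (single_supp_subset hqQ 1), hz', ?_⟩
  · rw [fsum_add, fsum_single, one_nsmul, hx', hx'dec]
    abel

/-- Key uniqueness lemma. -/
lemma no_extra_div {Q : Set M} (hfree : FreeOn Q) (hrc : RootClosedM M)
    (hmul : ∀ z : M, ∃ N : ℕ, ∃ C : M →₀ ℕ, 0 < N ∧ (C.support : Set M) ⊆ Q ∧ N • z = fsum C)
    {f f' : M →₀ ℕ} {z z' : M} (hf : (f.support : Set M) ⊆ Q)
    (hf' : (f'.support : Set M) ⊆ Q) (hz' : z' ∈ AperyM Q)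
    (heq : fsum f + z = fsum f' + z') {q : M} (hq : q ∈ Q) (hlt : f' q < f q) : False := by
  obtain ⟨N1, C, hN1, hC, hzC⟩ := hmul z
  obtain ⟨N2, C', hN2, hC', hzC'⟩ := hmul z'
  set N := N1 * N2 with hN
  have hNpos : 0 < N := Nat.mul_pos hN1 hN2
  have hNz : N • z = fsum (N2 • C) := by
    rw [fsum_nsmul, ← hzC, hN, mul_comm, mul_smul]
  have hNz' : N • z' = fsum (N1 • C') := by
    rw [fsum_nsmul, ← hzC', hN, mul_smul]
  have key : N • f + N2 • C = N • f' + N1 • C' := by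
    apply hfree
    · exact add_supp_subset (smul_supp_subset N hf) (smul_supp_subset N2 hC)
    · exact add_supp_subset (smul_supp_subset N hf') (smul_supp_subset N1 hC')
    · rw [fsum_add, fsum_add, ← hNz, ← hNz', fsum_nsmul, fsum_nsmul, ← smul_add, ← smul_add,
        heq]
  have hkeyq : N * f q + N2 * C q = N * f' q + N1 * C' q := by
    have := DFunLike.congr_fun key q
    simpa using this
  have hBq : N ≤ N1 * C' q := by
    have h1 : N * f' q + N ≤ N * f q := by
      have : f' q + 1 ≤ f q := hlt
      calc N * f' q + N = N * (f' q + 1) := by ring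
        _ ≤ N * f q := Nat.mul_le_mul_left N this
    omega
  -- decompose N1 • C' as single q N + rest
  set B := N1 • C' with hB
  have hBle : Finsupp.single q N ≤ B := by
    intro a
    rcases eq_or_ne a q with rfl | hne
    · simpa [hB] using hBq
    · simp [Finsupp.single_apply, Ne.symm hne]
  have hBsplit : B = Finsupp.single q N + (B - Finsupp.single q N) :=
    (add_tsub_cancel_of_le hBle).symm
  have hfB : fsum B = N • q + fsum (B - Finsupp.single q N) := by
    conv_lhs => rw [hBsplit]
    rw [fsum_add, fsum_single]
  have hdvd : MDvd (N • q) (N • z') := ⟨fsum (B - Finsupp.single q N), by rw [hNz', hfB]⟩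
  exact hz' q hq (hrc N q z' hNpos hdvd)

end Aux

/-- if `M` is root-closed inside factorial with base `Q`, then
`M = Ap(M,Q) ⊕ ⟨Q⟩`: every `x ∈ M` is uniquely `Σ λ_q q + z` with `z ∈ Ap(M,Q)`. -/
theorem apery_direct_sum_of_rootClosed {M : Type*} [AddCancelCommMonoid M]
    (hred : ∀ a b : M, a + b = 0 → a = 0)
    (hrc : RootClosedM M) (Q : Set M) (hIF : InsideFactorial Q) :
    ∀ x : M, ∃! p : (M →₀ ℕ) × M,
      (p.1.support : Set M) ⊆ Q ∧ p.2 ∈ AperyM Q ∧ x = fsum p.1 + p.2 := by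
  obtain ⟨hfree, hIF2⟩ := hIF
  have hmul : ∀ z : M, ∃ N : ℕ, ∃ C : M →₀ ℕ, 0 < N ∧ (C.support : Set M) ⊆ Q ∧
      N • z = fsum C := by
    intro z
    by_cases hz : z = 0
    · exact ⟨1, 0, one_pos, by simp, by simp [hz, fsum_zero]⟩
    · obtain ⟨m, hm, hmem⟩ := hIF2 z hz
      obtain ⟨g, hg, hge⟩ := exists_fsum hmem
      exact ⟨m, g, hm, hg, hge⟩
  intro x
  obtain ⟨f, z, hfsupp, hzA, hxeq⟩ :
      ∃ f : M →₀ ℕ, ∃ z : M, (f.support : Set M) ⊆ Q ∧ z ∈ AperyM Q ∧ x = fsum f + z := by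
    by_cases hx : x = 0
    · exact ⟨0, 0, by simp, zero_mem_apery hred (zero_not_mem_of_free hfree),
        by simp [hx, fsum_zero]⟩
    · obtain ⟨m, hm, hmem⟩ := hIF2 x hx
      obtain ⟨g, hg, hge⟩ := exists_fsum hmem
      exact exists_decomp hred hfree hIF2 (FDeg g) x m g hm hg hge le_rfl
  refine ⟨(f, z), ⟨hfsupp, hzA, hxeq⟩, ?_⟩
  rintro ⟨f', z'⟩ ⟨hf', hz', hxeq'⟩
  have hff : f' = f := by
    ext q
    by_contra hne
    have hqQ : q ∈ Q := by
      rcases eq_or_ne (f q) 0 with h0 | h0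
      · exact hf' (Finsupp.mem_support_iff.mpr fun hc => hne (by rw [hc, h0]))
      · exact hfsupp (Finsupp.mem_support_iff.mpr h0)
    rcases lt_or_gt_of_ne hne with h | h
    · exact no_extra_div hfree hrc hmul hfsupp hf' hz'
        (hxeq.symm.trans hxeq') hqQ h
    · exact no_extra_div hfree hrc hmul hf' hfsupp hzA
        (hxeq'.symm.trans hxeq) hqQ h
  have hzz : z' = z := by
    have : fsum f + z = fsum f + z' := by rw [← hxeq, hxeq', hff]
    exact (add_left_cancel this).symm
  simp [Prod.ext_iff, hff, hzz]
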